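/- arXiv:1507.08407 — 2 statements merged into one kernel-verified Lean document; each statement's English description precedes it below -/
import Mathlib

section
/- Let A be a Fréchet-dense subalgebra of C^∞(M) for a compact smooth manifold M. Then the span of elements f·dg with f, g ∈ A is dense in the space Ω¹(C^∞(M)) of smooth 1-forms with respect to its natural Fréchet topology. -/
/-- Lemma 3.8: Let `Cinf` stand for the Fréchet *-algebra
`C^∞(M)` of a compact smooth manifold, a topological algebra, and `Ω` for the
topological `C^∞(M)`-module `Ω¹(C^∞(M))` of smooth 1-forms, with continuous
module multiplication and continuous exterior derivative `d`, such that
`Ω¹(C^∞(M)) = span{f dg : f, g ∈ C^∞(M)}` is dense.  If `A` is a Fréchet-dense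
subalgebra of `C^∞(M)`, then `Ω¹(A) = span{f dg : f, g ∈ A}` is dense in
`Ω¹(C^∞(M))`. -/
theorem stmt0 {Cinf : Type*} [CommRing Cinf] [Algebra ℂ Cinf]
    [TopologicalSpace Cinf] [IsTopologicalRing Cinf]
    {Ω : Type*} [AddCommGroup Ω] [Module ℂ Ω] [Module Cinf Ω]
    [IsScalarTower ℂ Cinf Ω] [TopologicalSpace Ω] [IsTopologicalAddGroup Ω]
    (hsmul : Continuous fun p : Cinf × Ω => p.1 • p.2)
    (d : Cinf →ₗ[ℂ] Ω) (hd : Continuous d)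
    (hgen : Dense (↑(Submodule.span ℂ {ω : Ω | ∃ f g : Cinf, ω = f • d g}) : Set Ω))
    (A : Subalgebra ℂ Cinf) (hA : Dense (A : Set Cinf)) :
    Dense (↑(Submodule.span ℂ
      {ω : Ω | ∃ f g : Cinf, f ∈ A ∧ g ∈ A ∧ ω = f • d g}) : Set Ω) := by
  set S : Set Ω := {ω : Ω | ∃ f g : Cinf, f ∈ A ∧ g ∈ A ∧ ω = f • d g}
  set N : Submodule ℂ Ω := Submodule.span ℂ S
  -- continuity of no-scalar case
  haveI hsc : ContinuousConstSMul ℂ Ω := by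
    constructor
    intro c
    have h : Continuous fun x : Ω => (algebraMap ℂ Cinf c) • x :=
      hsmul.comp (continuous_const.prodMk continuous_id)
    simpa [algebraMap_smul] using h
  have hclosed : IsClosed (N.topologicalClosure : Set Ω) :=
    N.isClosed_topologicalClosure
  -- every generator f • d g is in the closure of N
  have hgen_sub : {ω : Ω | ∃ f g : Cinf, ω = f • d g} ⊆ (N.topologicalClosure : Set Ω) := by
    rintro ω ⟨f, g, rfl⟩
    have hφ : Continuous fun p : Cinf × Cinf => p.1 • d p.2 := by
      exact hsmul.comp (continuous_fst.prodMk (hd.comp continuous_snd))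
    have hmem : (f, g) ∈ closure ((A : Set Cinf) ×ˢ (A : Set Cinf)) := by
      rw [closure_prod_eq]
      exact ⟨hA f, hA g⟩
    have h1 : f • d g ∈ closure ((fun p : Cinf × Cinf => p.1 • d p.2) ''
        ((A : Set Cinf) ×ˢ (A : Set Cinf))) := by
      have := image_closure_subset_closure_image (s := (A : Set Cinf) ×ˢ (A : Set Cinf)) hφ
      exact this ⟨(f, g), hmem, rfl⟩
    refine closure_mono ?_ h1
    rintro ω ⟨⟨a, b⟩, ⟨ha, hb⟩, rfl⟩
    exact Submodule.subset_span ⟨a, b, ha, hb, rfl⟩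
  have hspan : Submodule.span ℂ {ω : Ω | ∃ f g : Cinf, ω = f • d g} ≤ N.topologicalClosure :=
    Submodule.span_le.2 hgen_sub
  have : closure (↑(Submodule.span ℂ {ω : Ω | ∃ f g : Cinf, ω = f • d g}) : Set Ω) ⊆
      (N.topologicalClosure : Set Ω) := closure_minimal hspan hclosed
  intro x
  have := this (hgen x)
  exact this
end

section
/- Let U ⊆ ℝⁿ be open with compact closure K, and let F : U → E be a continuous function into a Banach space E such that for every bounded linear functional ω on E, the scalar function ω ∘ F is C² on U with second partial derivatives bounded on K. Then for each point x⁰ ∈ U and each coordinate direction i, the difference quotients (F(x⁰ + h eᵢ) − F(x⁰))/h form a Cauchy family in E as h → 0, so the partial derivative ∂F/∂xᵢ(x⁰) exists in the norm topology of E. -/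
open Set Filter Metric

open Set Filter Metric

/-- Auxiliary scalar estimate: a C² function with second derivative bounded by `C`
on `U` has difference quotients along direction `e` at `x₀` that differ from the
directional derivative by at most `C * |h|`. -/
lemma key_scalar {n : ℕ}
    (U : Set (EuclideanSpace ℝ (Fin n))) (hU : IsOpen U)
    (f : EuclideanSpace ℝ (Fin n) → ℂ) (hf : ContDiffOn ℝ 2 f U)
    {C : ℝ} (hC : ∀ x ∈ U, ‖iteratedFDerivWithin ℝ 2 f U x‖ ≤ C)
    (x₀ : EuclideanSpace ℝ (Fin n)) (hx₀ : x₀ ∈ U)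
    {e : EuclideanSpace ℝ (Fin n)} (he : ‖e‖ = 1)
    {δ : ℝ} (hδ : Metric.ball x₀ δ ⊆ U) :
    ∀ h : ℝ, |h| < δ → h ≠ 0 →
      ‖h⁻¹ • (f (x₀ + h • e) - f x₀) - fderivWithin ℝ f U x₀ e‖ ≤ C * |h| := by
  intro h hhδ hh0
  set γ : ℝ → EuclideanSpace ℝ (Fin n) := fun t => x₀ + t • e with hγdef
  have hγmem : ∀ t : ℝ, |t| < δ → γ t ∈ U := by
    intro t ht
    apply hδ
    simp only [hγdef, Metric.mem_ball, dist_eq_norm, add_sub_cancel_left, norm_smul, he,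
      mul_one, Real.norm_eq_abs]
    exact ht
  set D1 : EuclideanSpace ℝ (Fin n) → (EuclideanSpace ℝ (Fin n)) →L[ℝ] ℂ :=
    fderivWithin ℝ f U with hD1def
  set D2 := fderivWithin ℝ D1 U with hD2def
  have hUD : UniqueDiffOn ℝ U := hU.uniqueDiffOn
  have hD1c : ContDiffOn ℝ 1 D1 U := hf.fderivWithin hUD (by norm_num)
  have hD2le : ∀ x ∈ U, ∀ m m', ‖(D2 x) m m'‖ ≤ C * ‖m‖ * ‖m'‖ := by
    intro x hx m m'
    have h2 := iteratedFDerivWithin_two_apply f hUD hx ![m, m']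
    have heq : ‖(D2 x) m m'‖ = ‖iteratedFDerivWithin ℝ 2 f U x ![m, m']‖ := by
      rw [h2]; simp [hD2def, hD1def]
    rw [heq]
    calc ‖iteratedFDerivWithin ℝ 2 f U x ![m, m']‖
        ≤ ‖iteratedFDerivWithin ℝ 2 f U x‖ * ∏ j, ‖![m, m'] j‖ :=
          (iteratedFDerivWithin ℝ 2 f U x).le_opNorm _
      _ ≤ C * ‖m‖ * ‖m'‖ := by
          rw [Fin.prod_univ_two]
          simp only [Matrix.cons_val_zero, Matrix.cons_val_one, Matrix.head_cons]
          rw [mul_assoc]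
          exact mul_le_mul_of_nonneg_right (hC x hx)
            (by positivity)
  -- the slice functions
  set J := Metric.ball (0 : ℝ) δ with hJdef
  have hJmem : ∀ t : ℝ, t ∈ J → |t| < δ := by
    intro t ht; simpa [hJdef, Real.dist_eq] using ht
  have hmapsTo : Set.MapsTo γ J U := fun t ht => hγmem t (hJmem t ht)
  have hγderiv : ∀ t : ℝ, HasDerivAt γ e t := by
    intro t
    have : HasDerivAt (fun t : ℝ => t • e) ((1 : ℝ) • e) t :=
      (hasDerivAt_id t).smul_const e
    simpa [hγdef] using this.const_add x₀
  set ψ : ℝ → ℂ := fun t => D1 (γ t) e with hψdef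
  have hψderiv : ∀ t ∈ J, HasDerivWithinAt ψ ((D2 (γ t)) e e) J t := by
    intro t ht
    have h1 : HasFDerivWithinAt D1 (D2 (γ t)) U (γ t) :=
      ((hD1c.differentiableOn one_ne_zero) (γ t) (hmapsTo ht)).hasFDerivWithinAt
    have h2 : HasDerivWithinAt (fun t => D1 (γ t)) ((D2 (γ t)) e) J t :=
      h1.comp_hasDerivWithinAt t (hγderiv t).hasDerivWithinAt hmapsTo
    have h3 := (ContinuousLinearMap.apply ℝ ℂ e).hasFDerivAt.comp_hasDerivWithinAt t h2
    exact h3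
  have hψlip : ∀ t ∈ J, ‖ψ t - ψ 0‖ ≤ C * |t| := by
    intro t ht
    have h0J : (0 : ℝ) ∈ J := by simp [hJdef, (abs_nonneg h).trans_lt (hhδ.trans_le le_rfl)]
    have := (convex_ball (0:ℝ) δ).norm_image_sub_le_of_norm_hasDerivWithin_le
      (f' := fun t => (D2 (γ t)) e e) hψderiv
      (fun t ht => by
        calc ‖(D2 (γ t)) e e‖ ≤ C * ‖e‖ * ‖e‖ := hD2le _ (hmapsTo ht) e e
          _ = C := by rw [he]; ring) h0J ht
    simpa using this
  -- Now apply the mean value inequality to θ t = φ t - t • ψ 0 on uIcc 0 h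
  set φ : ℝ → ℂ := fun t => f (γ t) with hφdef
  have hφderiv : ∀ t ∈ J, HasDerivWithinAt φ (ψ t) J t := by
    intro t ht
    have h1 : HasFDerivWithinAt f (D1 (γ t)) U (γ t) :=
      ((hf.differentiableOn (by norm_num)) (γ t) (hmapsTo ht)).hasFDerivWithinAt
    exact h1.comp_hasDerivWithinAt t (hγderiv t).hasDerivWithinAt hmapsTo
  have hsub : Set.uIcc (0 : ℝ) h ⊆ J := by
    intro t ht
    have h1 : |t| ≤ |h| := by
      rcases Set.mem_uIcc.mp ht with ⟨h1, h2⟩ | ⟨h1, h2⟩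
      · exact (abs_le_max_abs_abs h1 h2).trans (by simp)
      · exact (abs_le_max_abs_abs h1 h2).trans (by simp)
    simpa [hJdef, Real.dist_eq] using h1.trans_lt hhδ
  set θ : ℝ → ℂ := fun t => φ t - t • ψ 0 with hθdef
  have hθderiv : ∀ t ∈ Set.uIcc (0 : ℝ) h, HasDerivWithinAt θ (ψ t - ψ 0) (Set.uIcc 0 h) t := by
    intro t ht
    have h1 := ((hφderiv t (hsub ht)).mono hsub)
    have h2 : HasDerivWithinAt (fun t : ℝ => t • ψ 0) (ψ 0) (Set.uIcc 0 h) t := by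
      simpa using ((hasDerivAt_id t).smul_const (ψ 0)).hasDerivWithinAt
    exact h1.sub h2
  have hθbound : ∀ t ∈ Set.uIcc (0 : ℝ) h, ‖ψ t - ψ 0‖ ≤ C * |h| := by
    intro t ht
    have h1 : |t| ≤ |h| := by
      rcases Set.mem_uIcc.mp ht with ⟨h1, h2⟩ | ⟨h1, h2⟩
      · exact (abs_le_max_abs_abs h1 h2).trans (by simp)
      · exact (abs_le_max_abs_abs h1 h2).trans (by simp)
    have hC0 : 0 ≤ C := le_trans (norm_nonneg _) (hC x₀ hx₀)
    exact (hψlip t (hsub ht)).trans (by nlinarith [abs_nonneg t])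
  have h0m : (0 : ℝ) ∈ Set.uIcc (0 : ℝ) h := Set.left_mem_uIcc
  have hhm : h ∈ Set.uIcc (0 : ℝ) h := Set.right_mem_uIcc
  have hmain := (convex_uIcc (0 : ℝ) h).norm_image_sub_le_of_norm_hasDerivWithin_le
    hθderiv hθbound h0m hhm
  -- hmain : ‖θ h - θ 0‖ ≤ C * |h| * ‖h - 0‖
  have hmain' : ‖φ h - φ 0 - h • ψ 0‖ ≤ C * |h| * |h| := by
    have : θ h - θ 0 = φ h - φ 0 - h • ψ 0 := by simp [hθdef]; ring
    rw [this] at hmain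
    simpa [Real.norm_eq_abs] using hmain
  have hφ0 : φ 0 = f x₀ := by simp [hφdef, hγdef]
  have hψ0 : ψ 0 = fderivWithin ℝ f U x₀ e := by simp [hψdef, hγdef, hD1def]
  rw [← hψ0]
  have : h⁻¹ • (f (x₀ + h • e) - f x₀) - ψ 0 = h⁻¹ • (φ h - φ 0 - h • ψ 0) := by
    rw [hφ0]
    simp only [hφdef, hγdef, smul_sub]
    rw [smul_smul, inv_mul_cancel₀ hh0, one_smul]
  rw [this, norm_smul]
  calc ‖(h : ℝ)⁻¹‖ * ‖φ h - φ 0 - h • ψ 0‖ ≤ |h|⁻¹ * (C * |h| * |h|) := by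
        rw [Real.norm_eq_abs, abs_inv]
        exact mul_le_mul_of_nonneg_left hmain' (by positivity)
    _ = C * |h| := by
        field_simp


set_option maxHeartbeats 1000000 in
/-- core of Lemma 6.3: Let `U ⊆ ℝⁿ` be open with compact closure,
`E` a complex Banach space, `F : ℝⁿ → E` continuous on `U` such that for every
bounded linear functional `ω` on `E` the scalar function `ω ∘ F` is C² on `U`
with second derivative bounded on `U`.  Then for every `x⁰ ∈ U` and coordinate
direction `i`, the difference quotients `(F(x⁰ + h eᵢ) − F(x⁰))/h` converge in
norm as `h → 0`, i.e. the partial derivative `∂F/∂xᵢ(x⁰)` exists in `E`. -/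
theorem stmt5 {n : ℕ} {E : Type*} [NormedAddCommGroup E] [NormedSpace ℂ E]
    [CompleteSpace E]
    (U : Set (EuclideanSpace ℝ (Fin n))) (hU : IsOpen U)
    (hUcpt : IsCompact (closure U))
    (F : EuclideanSpace ℝ (Fin n) → E) (hFcont : ContinuousOn F U)
    (hslice : ∀ ω : E →L[ℂ] ℂ,
      ContDiffOn ℝ 2 (fun x => ω (F x)) U ∧
      ∃ C : ℝ, ∀ x ∈ U, ‖iteratedFDerivWithin ℝ 2 (fun y => ω (F y)) U x‖ ≤ C)
    (x₀ : EuclideanSpace ℝ (Fin n)) (hx₀ : x₀ ∈ U) (i : Fin n) :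
    ∃ L : E, Filter.Tendsto
      (fun h : ℝ => h⁻¹ • (F (x₀ + h • EuclideanSpace.single i (1 : ℝ)) - F x₀))
      (nhdsWithin 0 {0}ᶜ) (nhds L) := by
  classical
  set e : EuclideanSpace ℝ (Fin n) := EuclideanSpace.single i (1 : ℝ) with hedef
  have he : ‖e‖ = 1 := by simp [hedef, EuclideanSpace.norm_single]
  obtain ⟨δ, hδpos, hδ⟩ := Metric.isOpen_iff.mp hU x₀ hx₀
  set v : ℝ → E := fun h => h⁻¹ • (F (x₀ + h • e) - F x₀) with hvdef
  have key : ∀ ω : E →L[ℂ] ℂ, ∃ C : ℝ, ∀ h k : ℝ, |h| < δ → |k| < δ → h ≠ 0 → k ≠ 0 →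
      ‖ω (v h - v k)‖ ≤ C * (|h| + |k|) := by
    intro ω
    obtain ⟨hf, C, hC⟩ := hslice ω
    refine ⟨C, fun h k hh hk hh0 hk0 => ?_⟩
    have b1 := key_scalar U hU _ hf hC x₀ hx₀ he hδ h hh hh0
    have b2 := key_scalar U hU _ hf hC x₀ hx₀ he hδ k hk hk0
    have hωv : ∀ t : ℝ, ω (v t) = t⁻¹ • (ω (F (x₀ + t • e)) - ω (F x₀)) := by
      intro t
      simp [hvdef, map_sub]
    have heq : ω (v h - v k) =
        (h⁻¹ • (ω (F (x₀ + h • e)) - ω (F x₀)) - fderivWithin ℝ (fun x => ω (F x)) U x₀ e)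
        - (k⁻¹ • (ω (F (x₀ + k • e)) - ω (F x₀)) - fderivWithin ℝ (fun x => ω (F x)) U x₀ e) := by
      rw [map_sub, hωv h, hωv k]; ring
    rw [heq]
    calc ‖_ - _‖ ≤ C * |h| + C * |k| := (norm_sub_le _ _).trans (add_le_add b1 b2)
      _ = C * (|h| + |k|) := by ring
  -- Uniform boundedness
  set ι := {p : ℝ × ℝ // |p.1| < δ ∧ |p.2| < δ ∧ p.1 ≠ 0 ∧ p.2 ≠ 0} with hιdef
  haveI hne : Nonempty ι := by
    refine ⟨⟨(δ/2, δ/2), ?_, ?_, ?_, ?_⟩⟩ <;>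
      simp [abs_of_pos (by linarith : (0:ℝ) < δ/2)] <;> linarith
  set g : ι → StrongDual ℂ E →L[ℂ] ℂ := fun p =>
    NormedSpace.inclusionInDoubleDual ℂ E
      ((((|p.1.1| + |p.1.2| : ℝ) : ℂ))⁻¹ • (v p.1.1 - v p.1.2)) with hgdef
  have habs : ∀ p : ι, (0:ℝ) < |p.1.1| + |p.1.2| := by
    rintro ⟨⟨h, k⟩, h1, h2, h3, h4⟩
    have := abs_pos.mpr h3
    have := abs_pos.mpr h4
    dsimp only
    linarith
  have hpt : ∀ ω : StrongDual ℂ E, ∃ C, ∀ p : ι, ‖g p ω‖ ≤ C := by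
    intro ω
    obtain ⟨C, hC⟩ := key ω
    refine ⟨max C 0, fun p => ?_⟩
    obtain ⟨⟨h, k⟩, h1, h2, h3, h4⟩ := p
    have hp : (0:ℝ) < |h| + |k| := add_pos (abs_pos.mpr h3) (abs_pos.mpr h4)
    have hval : g ⟨(h, k), h1, h2, h3, h4⟩ ω
        = (((|h| + |k| : ℝ) : ℂ))⁻¹ * ω (v h - v k) := by
      simp [hgdef, NormedSpace.dual_def, map_smul, smul_eq_mul]
    rw [hval, norm_mul]
    have hnorminv : ‖(((|h| + |k| : ℝ) : ℂ))⁻¹‖ = (|h| + |k|)⁻¹ := by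
      rw [norm_inv, Complex.norm_real, Real.norm_eq_abs, abs_of_pos hp]
    rw [hnorminv]
    have hb := hC h k h1 h2 h3 h4
    have : (|h| + |k|)⁻¹ * ‖ω (v h - v k)‖ ≤ (|h| + |k|)⁻¹ * (C * (|h| + |k|)) :=
      mul_le_mul_of_nonneg_left hb (by positivity)
    refine this.trans ?_
    rw [show (|h| + |k|)⁻¹ * (C * (|h| + |k|)) = C by field_simp]
    exact le_max_left _ _
  obtain ⟨M, hM⟩ := banach_steinhaus hpt
  have hM0 : (0 : ℝ) ≤ M := le_trans (norm_nonneg _) (hM (Classical.arbitrary ι))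
  have hnormle : ∀ h k : ℝ, |h| < δ → |k| < δ → h ≠ 0 → k ≠ 0 →
      ‖v h - v k‖ ≤ M * (|h| + |k|) := by
    intro h k h1 h2 h3 h4
    set p : ι := ⟨(h, k), h1, h2, h3, h4⟩ with hpdef
    have hp : (0:ℝ) < |h| + |k| := add_pos (abs_pos.mpr h3) (abs_pos.mpr h4)
    have hiso : ‖g p‖ = ‖(((|h| + |k| : ℝ) : ℂ))⁻¹ • (v h - v k)‖ := by
      have : g p = NormedSpace.inclusionInDoubleDualLi ℂ (E := E)
          ((((|h| + |k| : ℝ) : ℂ))⁻¹ • (v h - v k)) := rfl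
      rw [this, (NormedSpace.inclusionInDoubleDualLi ℂ (E := E)).norm_map]
    have := hM p
    rw [hiso, norm_smul, norm_inv, Complex.norm_real, Real.norm_eq_abs,
      abs_of_pos hp] at this
    calc ‖v h - v k‖ = (|h| + |k|) * ((|h| + |k|)⁻¹ * ‖v h - v k‖) := by
          rw [mul_inv_cancel_left₀ (ne_of_gt hp)]
      _ ≤ (|h| + |k|) * M := mul_le_mul_of_nonneg_left this (le_of_lt hp)
      _ = M * (|h| + |k|) := mul_comm _ _
  -- Cauchy criterion
  have hcauchy : Cauchy (Filter.map v (nhdsWithin (0:ℝ) {0}ᶜ)) := by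
    rw [Metric.cauchy_iff]
    constructor
    · exact Filter.NeBot.map (inferInstance : (nhdsWithin (0:ℝ) {0}ᶜ).NeBot) v
    · intro ε hε
      set r := min (δ / 2) (ε / (2 * M + 1)) with hrdef
      have hr0 : 0 < r := lt_min (by linarith) (by positivity)
      have hrδ : r ≤ δ / 2 := min_le_left _ _
      have hrε : r ≤ ε / (2 * M + 1) := min_le_right _ _
      refine ⟨v '' (Metric.ball (0:ℝ) r ∩ {0}ᶜ), ?_, ?_⟩
      · apply Filter.image_mem_map
        exact Filter.inter_mem (nhdsWithin_le_nhds (Metric.ball_mem_nhds _ hr0))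
          self_mem_nhdsWithin
      · rintro a ⟨h, ⟨hh1, hh2⟩, rfl⟩ b ⟨k, ⟨hk1, hk2⟩, rfl⟩
        have hh1' : |h| < r := by simpa [Real.dist_eq] using hh1
        have hk1' : |k| < r := by simpa [Real.dist_eq] using hk1
        have hh0 : h ≠ 0 := hh2
        have hk0 : k ≠ 0 := hk2
        have hhδ : |h| < δ := hh1'.trans_le (hrδ.trans (by linarith))
        have hkδ : |k| < δ := hk1'.trans_le (hrδ.trans (by linarith))
        have hb := hnormle h k hhδ hkδ hh0 hk0
        rw [dist_eq_norm]
        calc ‖v h - v k‖ ≤ M * (|h| + |k|) := hb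
          _ ≤ M * (2 * r) := mul_le_mul_of_nonneg_left (by linarith) hM0
          _ < ε := by
              have h1 : r * (2 * M + 1) ≤ ε := (le_div_iff₀ (by linarith : (0:ℝ) < 2 * M + 1)).mp hrε
              nlinarith
  obtain ⟨L, hL⟩ := CompleteSpace.complete hcauchy
  exact ⟨L, hL⟩
end
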